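/- (Lemma 1, absorbing boundary condition on the left.) Let x₀ ∈ ℝ and let v : ℝ × ℝ → ℝ be C² on an open set containing the region H = {(x,t) : x ≤ x₀, t ≥ 0}. Assume that v_tt(x,t) = v_xx(x,t) for all (x,t) ∈ H, and that v(x,0) = 0 and v_t(x,0) = 0 for all x ≤ x₀. Then for every x₂ ≤ x₀ and every t ≥ 0 one has v_x(x₂,t) − v_t(x₂,t) = 0. -/

import Mathlib

open Set

/-- Partial derivative in the first variable. -/
noncomputable def partialX (f : ℝ × ℝ → ℝ) : ℝ × ℝ → ℝ :=
  fun p => deriv (fun x => f (x, p.2)) p.1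

/-- Partial derivative in the second variable. -/
noncomputable def partialT (f : ℝ × ℝ → ℝ) : ℝ × ℝ → ℝ :=
  fun p => deriv (fun t => f (p.1, t)) p.2

/-- If a differentiable function vanishes on a left half-line containing the point,
its derivative at that point is zero. -/
lemma deriv_eq_zero_of_eqOn_zero_Iic {f : ℝ → ℝ} {a x₀ : ℝ} (ha : a ≤ x₀)
    (hdiff : DifferentiableAt ℝ f a) (hzero : ∀ x ≤ x₀, f x = 0) :
    deriv f a = 0 := by
  have h1 : HasDerivWithinAt f (deriv f a) (Iic a) a :=
    hdiff.hasDerivAt.hasDerivWithinAt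
  have h2 : HasDerivWithinAt f 0 (Iic a) a := by
    have hz : HasDerivWithinAt (fun _ : ℝ => (0 : ℝ)) 0 (Iic a) a :=
      (hasDerivAt_const a (0 : ℝ)).hasDerivWithinAt
    refine hz.congr (fun x hx => ?_) (hzero a ha)
    exact hzero x (le_trans hx ha)
  have hu : UniqueDiffWithinAt ℝ (Iic a) a := uniqueDiffOn_Iic a a Set.self_mem_Iic
  rw [← h1.derivWithin hu, h2.derivWithin hu]

/-- Lemma 1 (absorbing boundary condition on the left). -/
theorem absorbing_boundary_left (x₀ : ℝ) (v : ℝ × ℝ → ℝ)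
    (hreg : ∃ U : Set (ℝ × ℝ), IsOpen U ∧ {p : ℝ × ℝ | p.1 ≤ x₀ ∧ 0 ≤ p.2} ⊆ U ∧
      ContDiffOn ℝ 2 v U)
    (hwave : ∀ p : ℝ × ℝ, p.1 ≤ x₀ → 0 ≤ p.2 →
      partialT (partialT v) p = partialX (partialX v) p)
    (hinit : ∀ x : ℝ, x ≤ x₀ → v (x, 0) = 0 ∧ partialT v (x, 0) = 0) :
    ∀ x₂ : ℝ, x₂ ≤ x₀ → ∀ t : ℝ, 0 ≤ t →
      partialX v (x₂, t) - partialT v (x₂, t) = 0 := by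
  obtain ⟨U, hUo, hHU, hv⟩ := hreg
  set F : ℝ × ℝ → (ℝ × ℝ →L[ℝ] ℝ) := fderiv ℝ v with hFdef
  have hF : ContDiffOn ℝ 1 F U := hv.fderiv_of_isOpen hUo (by norm_num)
  -- v has fderiv F p at every p ∈ U
  have hvd : ∀ p ∈ U, HasFDerivAt v (F p) p := by
    intro p hp
    exact ((hv.differentiableOn (by norm_num)).differentiableAt
      (hUo.mem_nhds hp)).hasFDerivAt
  -- F is differentiable at every p ∈ U
  have hFd : ∀ p ∈ U, HasFDerivAt F (fderiv ℝ F p) p := by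
    intro p hp
    exact ((hF.differentiableOn (by norm_num)).differentiableAt
      (hUo.mem_nhds hp)).hasFDerivAt
  -- derivative of affine curves into the plane
  have hline1 : ∀ (c a : ℝ), HasDerivAt (fun x : ℝ => (x, c)) ((1 : ℝ), (0 : ℝ)) a := by
    intro c a
    exact HasDerivAt.prodMk (hasDerivAt_id a) (hasDerivAt_const a c)
  have hline2 : ∀ (c a : ℝ), HasDerivAt (fun t : ℝ => (c, t)) ((0 : ℝ), (1 : ℝ)) a := by
    intro c a
    exact HasDerivAt.prodMk (hasDerivAt_const a c) (hasDerivAt_id a)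
  -- first partials in terms of F
  have hpX : ∀ p ∈ U, partialX v p = F p (1, 0) := by
    intro p hp
    have := (hvd p hp).comp_hasDerivAt p.1
      (by simpa using hline1 p.2 p.1)
    exact this.deriv
  have hpT : ∀ p ∈ U, partialT v p = F p (0, 1) := by
    intro p hp
    have := (hvd p hp).comp_hasDerivAt p.2
      (by simpa using hline2 p.1 p.2)
    exact this.deriv
  -- second partials in terms of fderiv F
  have hppT : ∀ p ∈ U, partialT (partialT v) p = fderiv ℝ F p (0, 1) (0, 1) := by
    intro p hp
    have hmem : ∀ᶠ s in nhds p.2, ((p.1, s) : ℝ × ℝ) ∈ U := by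
      have hc : ContinuousAt (fun s : ℝ => ((p.1, s) : ℝ × ℝ)) p.2 :=
        (continuous_const.prodMk continuous_id).continuousAt
      exact hc.eventually_mem (hUo.mem_nhds (by simpa using hp))
    have heq : (fun s => partialT v (p.1, s)) =ᶠ[nhds p.2]
        (fun s => F (p.1, s) (0, 1)) := by
      filter_upwards [hmem] with s hs
      exact hpT (p.1, s) hs
    have hFc : HasDerivAt (fun s : ℝ => F (p.1, s)) (fderiv ℝ F p (0, 1)) p.2 :=
      (hFd p hp).comp_hasDerivAt p.2 (by simpa using hline2 p.1 p.2)
    have happ : HasDerivAt (fun s : ℝ => F (p.1, s) (0, 1))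
        (fderiv ℝ F p (0, 1) (0, 1)) p.2 := by
      have := hFc.clm_apply (hasDerivAt_const p.2 ((0 : ℝ), (1 : ℝ)))
      simpa using this
    calc partialT (partialT v) p = deriv (fun s => partialT v (p.1, s)) p.2 := rfl
      _ = deriv (fun s => F (p.1, s) (0, 1)) p.2 := heq.deriv_eq
      _ = fderiv ℝ F p (0, 1) (0, 1) := happ.deriv
  have hppX : ∀ p ∈ U, partialX (partialX v) p = fderiv ℝ F p (1, 0) (1, 0) := by
    intro p hp
    have hmem : ∀ᶠ s in nhds p.1, ((s, p.2) : ℝ × ℝ) ∈ U := by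
      have hc : ContinuousAt (fun s : ℝ => ((s, p.2) : ℝ × ℝ)) p.1 :=
        (continuous_id.prodMk continuous_const).continuousAt
      exact hc.eventually_mem (hUo.mem_nhds (by simpa using hp))
    have heq : (fun s => partialX v (s, p.2)) =ᶠ[nhds p.1]
        (fun s => F (s, p.2) (1, 0)) := by
      filter_upwards [hmem] with s hs
      exact hpX (s, p.2) hs
    have hFc : HasDerivAt (fun s : ℝ => F (s, p.2)) (fderiv ℝ F p (1, 0)) p.1 :=
      (hFd p hp).comp_hasDerivAt p.1 (by simpa using hline1 p.2 p.1)
    have happ : HasDerivAt (fun s : ℝ => F (s, p.2) (1, 0))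
        (fderiv ℝ F p (1, 0) (1, 0)) p.1 := by
      have := hFc.clm_apply (hasDerivAt_const p.1 ((1 : ℝ), (0 : ℝ)))
      simpa using this
    calc partialX (partialX v) p = deriv (fun s => partialX v (s, p.2)) p.1 := rfl
      _ = deriv (fun s => F (s, p.2) (1, 0)) p.1 := heq.deriv_eq
      _ = fderiv ℝ F p (1, 0) (1, 0) := happ.deriv
  -- symmetry of the second derivative at points of U
  have hsymm : ∀ p ∈ U, ∀ a b : ℝ × ℝ, fderiv ℝ F p a b = fderiv ℝ F p b a := by
    intro p hp a b
    have hev : ∀ᶠ y in nhds p, HasFDerivAt v (F y) y := by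
      filter_upwards [hUo.mem_nhds hp] with y hy
      exact hvd y hy
    exact second_derivative_symmetric_of_eventually hev (hFd p hp) a b
  -- main argument
  intro x₂ hx₂ t ht
  set γ : ℝ → ℝ × ℝ := fun s => (x₂ - t + s, s) with hγdef
  have hγH : ∀ s ∈ Icc (0 : ℝ) t, γ s ∈ {p : ℝ × ℝ | p.1 ≤ x₀ ∧ 0 ≤ p.2} := by
    intro s hs
    exact ⟨by simp only [hγdef]; linarith [hs.2], hs.1⟩
  have hγU : ∀ s ∈ Icc (0 : ℝ) t, γ s ∈ U := fun s hs => hHU (hγH s hs)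
  set g : ℝ → ℝ := fun s => F (γ s) (0, 1) - F (γ s) (1, 0) with hgdef
  have hγd : ∀ s : ℝ, HasDerivAt γ ((1 : ℝ), (1 : ℝ)) s := by
    intro s
    exact HasDerivAt.prodMk ((hasDerivAt_id s).const_add (x₂ - t)) (hasDerivAt_id s)
  have hgderiv : ∀ s ∈ Icc (0 : ℝ) t, HasDerivAt g 0 s := by
    intro s hs
    have hpU := hγU s hs
    have hpH := hγH s hs
    set p := γ s
    set D2 := fderiv ℝ F p with hD2
    have hFc : HasDerivAt (fun s' : ℝ => F (γ s')) (D2 (1, 1)) s :=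
      HasFDerivAt.comp_hasDerivAt (l := F) (f := γ) s (hFd p hpU) (hγd s)
    have h1 : HasDerivAt (fun s' : ℝ => F (γ s') (0, 1)) (D2 (1, 1) (0, 1)) s := by
      have := hFc.clm_apply (hasDerivAt_const s ((0 : ℝ), (1 : ℝ)))
      simpa using this
    have h2 : HasDerivAt (fun s' : ℝ => F (γ s') (1, 0)) (D2 (1, 1) (1, 0)) s := by
      have := hFc.clm_apply (hasDerivAt_const s ((1 : ℝ), (0 : ℝ)))
      simpa using this
    have hsum : ((1 : ℝ), (1 : ℝ)) = ((1 : ℝ), (0 : ℝ)) + ((0 : ℝ), (1 : ℝ)) := by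
      simp [Prod.ext_iff]
    have hzero : D2 (1, 1) (0, 1) - D2 (1, 1) (1, 0) = 0 := by
      have hwe : D2 (0, 1) (0, 1) = D2 (1, 0) (1, 0) := by
        rw [← hppT p hpU, ← hppX p hpU]
        exact hwave p hpH.1 hpH.2
      have hmix : D2 (1, 0) (0, 1) = D2 (0, 1) (1, 0) := hsymm p hpU _ _
      rw [hsum]
      simp only [map_add, ContinuousLinearMap.add_apply]
      rw [hwe, hmix]
      ring
    have := h1.sub h2
    rw [hzero] at this
    exact this
  have hgcont : ContinuousOn g (Icc 0 t) :=
    fun s hs => ((hgderiv s hs).continuousAt).continuousWithinAt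
  have hgconst : g t = g 0 := by
    have := constant_of_has_deriv_right_zero hgcont
      (fun s hs => ((hgderiv s (Ico_subset_Icc_self hs)).hasDerivWithinAt))
    exact this t (right_mem_Icc.mpr ht)
  -- evaluate g at 0
  have hq : ((x₂ - t, 0) : ℝ × ℝ) ∈ {p : ℝ × ℝ | p.1 ≤ x₀ ∧ 0 ≤ p.2} :=
    ⟨show x₂ - t ≤ x₀ by linarith, le_refl 0⟩
  have hqU : ((x₂ - t, 0) : ℝ × ℝ) ∈ U := hHU hq
  have hg0 : g 0 = 0 := by
    have hγ0 : γ 0 = (x₂ - t, 0) := by simp [hγdef]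
    have hT0 : partialT v (x₂ - t, 0) = 0 := (hinit (x₂ - t) (by linarith)).2
    have hX0 : partialX v (x₂ - t, 0) = 0 := by
      have hdiff : DifferentiableAt ℝ (fun x => v (x, (0 : ℝ))) (x₂ - t) := by
        have := (hvd _ hqU).comp_hasDerivAt (x₂ - t)
          (by simpa using hline1 (0 : ℝ) (x₂ - t))
        exact this.differentiableAt
      exact deriv_eq_zero_of_eqOn_zero_Iic (show x₂ - t ≤ x₀ by linarith) hdiff
        (fun x hx => (hinit x hx).1)
    have := hpT (x₂ - t, 0) hqU
    have := hpX (x₂ - t, 0) hqU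
    simp only [hgdef, hγ0]
    rw [← hpT (x₂ - t, 0) hqU, ← hpX (x₂ - t, 0) hqU, hT0, hX0]
    ring
  -- evaluate g at t and conclude
  have hγt : γ t = (x₂, t) := by simp [hγdef]
  have hpUt : ((x₂, t) : ℝ × ℝ) ∈ U := hHU ⟨show x₂ ≤ x₀ from hx₂, show (0:ℝ) ≤ t from ht⟩
  have hgt : g t = partialT v (x₂, t) - partialX v (x₂, t) := by
    simp only [hgdef, hγt]
    rw [← hpT (x₂, t) hpUt, ← hpX (x₂, t) hpUt]
  have : partialT v (x₂, t) - partialX v (x₂, t) = 0 := by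
    rw [← hgt, hgconst, hg0]
  linarith
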